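/- Suppose G is local with respect to a neighborhood map N : ι → Set ι, i.e. G_i(x) = G_i(y) whenever the states x and y agree on all components in N(i), and suppose N(i) ∩ (F∖F̲) = ∅ for every i ∈ I₁∪I₂∪C. Then the LTS3 step with M = 1 coincides, in every component i ∈ ι, with one global SSPRK3 step with step Δt applied to the full system: x^new = (1/3)x⁰ + (2/3)y₂ + (2/3)Δt·G(y₂), where y₁ = x⁰ + Δt·G(x⁰) and y₂ = (3/4)x⁰ + (1/4)y₁ + (1/4)Δt·G(y₁). -/
import Mathlib


open scoped Classical

/-- The substepping recursion of one LTS3 step. Starting from the state `x0` and the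
stage vectors `x1`, `x2`, with coarse step `Δt` and substep count `M`, it returns the
quintuple `(a^k, P^k, Q^k, R^k, z^{k-1})`: the fine solution after `k` substeps
(meaningful on `F`), the three accumulated interface correction terms (meaningful on
`I₁ ∪ I₂`), and the last third-stage vector `z` computed. -/
noncomputable def lts3Sub {ι : Type*} (F I₁ : Set ι)
    (G : (ι → ℝ) → ι → ℝ) (Δt : ℝ) (M : ℕ) (x0 x1 x2 : ι → ℝ) :
    ℕ → ((ι → ℝ) × (ι → ℝ) × (ι → ℝ) × (ι → ℝ) × (ι → ℝ))
  | 0 => (x0, fun _ => 0, fun _ => 0, fun _ => 0, x0)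
  | k + 1 =>
    let s := lts3Sub F I₁ G Δt M x0 x1 x2 k
    let a := s.1
    let P := s.2.1
    let Q := s.2.2.1
    let R := s.2.2.2.1
    -- interpolation coefficients
    let αk : ℝ := (k : ℝ) / M
    let αt : ℝ := (k : ℝ) ^ 2 / (M : ℝ) ^ 2
    let βk : ℝ := ((k : ℝ) + 1) / M
    let βt : ℝ := (k : ℝ) * ((k : ℝ) + 2) / (M : ℝ) ^ 2
    let γk : ℝ := (2 * (k : ℝ) + 1) / (2 * M)
    let γt : ℝ := (2 * (k : ℝ) ^ 2 + 2 * (k : ℝ) + 1) / (2 * (M : ℝ) ^ 2)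
    -- v^k: a^k on F, the α-interpolant on I₁, x⁰ on I₂ ∪ C
    let v : ι → ℝ := fun i =>
      if i ∈ F then a i
      else if i ∈ I₁ then
        (1 - αk - αt) * x0 i + (αk - αt) * x1 i + 2 * αt * x2 i
      else x0 i
    -- b^k = v^k + (Δt/M)·G(v^k) (used on F)
    let b : ι → ℝ := fun i => v i + (Δt / M) * G v i
    -- w^k: b^k on F, the β-interpolant on I₁, x¹ on I₂ ∪ C
    let w : ι → ℝ := fun i =>
      if i ∈ F then b i
      else if i ∈ I₁ then
        (1 - βk - βt) * x0 i + (βk - βt) * x1 i + 2 * βt * x2 i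
      else x1 i
    -- c^k = (3/4)a^k + (1/4)b^k + (1/4)(Δt/M)·G(w^k) (used on F)
    let c : ι → ℝ := fun i =>
      (3 / 4) * a i + (1 / 4) * b i + (1 / 4) * (Δt / M) * G w i
    -- z^k: c^k on F, the γ-interpolant on I₁, x² on I₂ ∪ C
    let z : ι → ℝ := fun i =>
      if i ∈ F then c i
      else if i ∈ I₁ then
        (1 - γk - γt) * x0 i + (γk - γt) * x1 i + 2 * γt * x2 i
      else x2 i
    (fun i => (1 / 3) * a i + (2 / 3) * c i + (2 / 3) * (Δt / M) * G z i,
     fun i => P i + G v i,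
     fun i => Q i + G w i,
     fun i => R i + G z i,
     z)

/-- One step of the third-order local time-stepping scheme LTS3, with fine region `F`,
fine cells nearest interface 1 `Fu = F̲ ⊆ F`, interface regions `I₁`, `I₂`, coarse
region `C`, right-hand side `G`, coarse step `Δt` and `M` fine substeps per coarse
step. -/
noncomputable def lts3Step {ι : Type*} (F Fu I₁ I₂ C : Set ι)
    (G : (ι → ℝ) → ι → ℝ) (Δt : ℝ) (M : ℕ) (x0 : ι → ℝ) : ι → ℝ :=
  -- x¹ = x⁰ + Δt·G(x⁰) on F̲ ∪ I₁ ∪ I₂ ∪ C, and x¹ = x⁰ on F \ F̲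
  let x1 : ι → ℝ := fun i =>
    if i ∈ F ∧ i ∉ Fu then x0 i else x0 i + Δt * G x0 i
  -- x² = (3/4)x⁰ + (1/4)x¹ + (1/4)Δt·G(x¹) (used on I₁ ∪ I₂ ∪ C)
  let x2 : ι → ℝ := fun i =>
    (3 / 4) * x0 i + (1 / 4) * x1 i + (1 / 4) * Δt * G x1 i
  let s := lts3Sub F I₁ G Δt M x0 x1 x2 M
  fun i =>
    if i ∈ F then s.1 i
    else if i ∈ C then
      (1 / 3) * x0 i + (2 / 3) * x2 i + (2 / 3) * Δt * G s.2.2.2.2 i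
    else
      x0 i + (Δt / M) *
        ((1 / 6) * s.2.1 i + (1 / 6) * s.2.2.1 i + (2 / 3) * s.2.2.2.1 i)

lemma lts3Sub_one {ι : Type*} (F I₁ : Set ι)
    (G : (ι → ℝ) → ι → ℝ) (Δt : ℝ) (x0 x1 x2 : ι → ℝ) :
    lts3Sub F I₁ G Δt 1 x0 x1 x2 1 =
    ((fun i => (1 / 3) * x0 i + (2 / 3) * ((3 / 4) * x0 i
        + (1 / 4) * (x0 i + Δt * G x0 i)
        + (1 / 4) * Δt * G (fun j => if j ∈ F then x0 j + Δt * G x0 j else x1 j) i)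
      + (2 / 3) * Δt * G (fun j => if j ∈ F then
          (3 / 4) * x0 j + (1 / 4) * (x0 j + Δt * G x0 j)
            + (1 / 4) * Δt * G (fun m => if m ∈ F then x0 m + Δt * G x0 m else x1 m) j
        else x2 j) i),
     (fun i => G x0 i),
     (fun i => G (fun j => if j ∈ F then x0 j + Δt * G x0 j else x1 j) i),
     (fun i => G (fun j => if j ∈ F then
          (3 / 4) * x0 j + (1 / 4) * (x0 j + Δt * G x0 j)
            + (1 / 4) * Δt * G (fun m => if m ∈ F then x0 m + Δt * G x0 m else x1 m) j
        else x2 j) i),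
     (fun j => if j ∈ F then
          (3 / 4) * x0 j + (1 / 4) * (x0 j + Δt * G x0 j)
            + (1 / 4) * Δt * G (fun m => if m ∈ F then x0 m + Δt * G x0 m else x1 m) j
        else x2 j)) := by
  show lts3Sub F I₁ G Δt 1 x0 x1 x2 (0 + 1) = _
  rw [lts3Sub, lts3Sub]
  norm_num

/-- If `G` is local with respect to a neighborhood map `N` and no component in
`I₁ ∪ I₂ ∪ C` sees the fine cells away from the interface (`N(i) ∩ (F \ F̲) = ∅` for
`i ∈ I₁ ∪ I₂ ∪ C`), then the LTS3 step with `M = 1` coincides, in every component, with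
one global SSPRK3 step with step `Δt` applied to the full system. -/
theorem lts3_M_eq_one_is_ssprk3 {ι : Type*} [Fintype ι]
    (F Fu I₁ I₂ C : Set ι) (hFu : Fu ⊆ F)
    (hcover : ∀ i : ι, i ∈ F ∨ i ∈ I₁ ∨ i ∈ I₂ ∨ i ∈ C)
    (hFI₁ : F ∩ I₁ = ∅) (hFI₂ : F ∩ I₂ = ∅) (hFC : F ∩ C = ∅)
    (hI₁I₂ : I₁ ∩ I₂ = ∅) (hI₁C : I₁ ∩ C = ∅) (hI₂C : I₂ ∩ C = ∅)
    (G : (ι → ℝ) → ι → ℝ) (Δt : ℝ)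
    (N : ι → Set ι)
    (hlocal : ∀ (i : ι) (x y : ι → ℝ), (∀ j ∈ N i, x j = y j) → G x i = G y i)
    (hN : ∀ i ∈ I₁ ∪ I₂ ∪ C, N i ∩ (F \ Fu) = ∅)
    (x0 : ι → ℝ) :
    ∀ i : ι, lts3Step F Fu I₁ I₂ C G Δt 1 x0 i =
      (fun (y1 : ι → ℝ) =>
        (fun (y2 : ι → ℝ) =>
          (1 / 3) * x0 i + (2 / 3) * y2 i + (2 / 3) * Δt * G y2 i)
        (fun j => (3 / 4) * x0 j + (1 / 4) * y1 j + (1 / 4) * Δt * G y1 j))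
      (fun j => x0 j + Δt * G x0 j) := by
  intro i
  simp only [lts3Step, lts3Sub_one]
  have hw : (fun j => if j ∈ F then x0 j + Δt * G x0 j
        else if j ∈ F ∧ j ∉ Fu then x0 j else x0 j + Δt * G x0 j)
      = fun j => x0 j + Δt * G x0 j := by
    funext j
    split
    · rfl
    · next hj => rw [if_neg (fun h => hj h.1)]
  rw [hw]
  have hG1 : ∀ j, j ∉ F →
      G (fun m => if m ∈ F ∧ m ∉ Fu then x0 m else x0 m + Δt * G x0 m) j
        = G (fun m => x0 m + Δt * G x0 m) j := by
    intro j hj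
    have hj' : j ∈ I₁ ∪ I₂ ∪ C := by
      rcases hcover j with h | h | h | h
      · exact absurd h hj
      · exact Or.inl (Or.inl h)
      · exact Or.inl (Or.inr h)
      · exact Or.inr h
    refine hlocal j _ _ fun m hm => ?_
    have hm' : m ∉ F \ Fu := by
      intro hmd
      have h0 := Set.eq_empty_iff_forall_notMem.mp (hN j hj') m
      exact h0 ⟨hm, hmd⟩
    rw [if_neg (fun h => hm' ⟨h.1, h.2⟩)]
  have hz : (fun j => if j ∈ F then
        3 / 4 * x0 j + 1 / 4 * (x0 j + Δt * G x0 j) +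
          1 / 4 * Δt * G (fun m => x0 m + Δt * G x0 m) j
      else
        (3 / 4 * x0 j + 1 / 4 * if j ∈ F ∧ j ∉ Fu then x0 j else x0 j + Δt * G x0 j) +
          1 / 4 * Δt * G (fun m => if m ∈ F ∧ m ∉ Fu then x0 m else x0 m + Δt * G x0 m) j)
      = fun j => 3 / 4 * x0 j + 1 / 4 * (x0 j + Δt * G x0 j) +
          1 / 4 * Δt * G (fun m => x0 m + Δt * G x0 m) j := by
    funext j
    split
    · rfl
    · next hj => rw [if_neg (fun h => hj h.1), hG1 j hj]
  rw [hz]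
  by_cases hiF : i ∈ F
  · rw [if_pos hiF]
  · rw [if_neg hiF]
    by_cases hiC : i ∈ C
    · rw [if_pos hiC, if_neg (fun h => hiF h.1), hG1 i hiF]
    · rw [if_neg hiC]
      norm_num
      ring
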